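/- arXiv:1605.02440 — 2 statements merged into one kernel-verified Lean document; each statement's English description precedes it below -/
import Mathlib

section
/- Let χ be a primitive Dirichlet character modulo q and let a, c be coprime positive integers. Then (1/(cq)) Σ_{ℓ=1}^{cq} χ(ℓ) e(ℓa/c) equals 0 if c does not divide q, and equals (1/q) χ̄(aq/c) τ(χ) if c divides q, where τ(χ) = Σ_{ℓ=1}^{q} χ(ℓ) e(ℓ/q) is the Gauss sum. -/
open Complex

/-- `e(x) = exp(2πix)`. -/
noncomputable def e (x : ℝ) : ℂ := Complex.exp (2 * Real.pi * Complex.I * x)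

/-- The Gauss sum `τ(χ) = ∑_{ℓ=1}^{q} χ(ℓ) e(ℓ/q)`. -/
noncomputable def gaussSum' (q : ℕ) (χ : DirichletCharacter ℂ q) : ℂ :=
  ∑ ℓ ∈ Finset.Icc 1 q, χ (ℓ : ZMod q) * e ((ℓ : ℝ) / (q : ℝ))

open ZMod AddChar

-- helper: sums over Icc 1 n / range n equal sums over ZMod n
lemma sum_range_eq_sum_zmod {M : Type*} [AddCommMonoid M] (n : ℕ) [NeZero n]
    (H : ZMod n → M) : ∑ ℓ ∈ Finset.range n, H (ℓ : ZMod n) = ∑ x : ZMod n, H x := by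
  refine Finset.sum_nbij' (fun ℓ => (ℓ : ZMod n)) (fun x => x.val) ?_ ?_ ?_ ?_ ?_
  · intro a _; exact Finset.mem_univ _
  · intro x _; exact Finset.mem_range.mpr (ZMod.val_lt x)
  · intro a ha; exact ZMod.val_cast_of_lt (Finset.mem_range.mp ha)
  · intro x _; simp [ZMod.natCast_val, ZMod.cast_id]
  · intro a _; rfl

lemma sum_Icc_eq_sum_zmod {M : Type*} [AddCommMonoid M] (n : ℕ) [NeZero n]
    (H : ZMod n → M) : ∑ ℓ ∈ Finset.Icc 1 n, H (ℓ : ZMod n) = ∑ x : ZMod n, H x := by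
  rw [← sum_range_eq_sum_zmod n H]
  refine Finset.sum_nbij' (fun ℓ => ℓ % n) (fun j => if j = 0 then n else j) ?_ ?_ ?_ ?_ ?_
  · intro a _; exact Finset.mem_range.mpr (Nat.mod_lt _ (Nat.pos_of_ne_zero (NeZero.ne n)))
  · intro j hj
    rcases eq_or_ne j 0 with h | h
    · simp only [h, if_pos rfl, Finset.mem_Icc]
      exact ⟨Nat.one_le_iff_ne_zero.mpr (NeZero.ne n), le_rfl⟩
    · simp only [h, if_neg h, Finset.mem_Icc]
      exact ⟨Nat.one_le_iff_ne_zero.mpr h, (Finset.mem_range.mp hj).le⟩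
  · intro a ha
    obtain ⟨h1, h2⟩ := Finset.mem_Icc.mp ha
    rcases eq_or_ne a n with rfl | h
    · simp
    · rw [Nat.mod_eq_of_lt (lt_of_le_of_ne h2 h), if_neg (by omega)]
  · intro j hj
    rcases eq_or_ne j 0 with rfl | h
    · simp
    · rw [if_neg h, Nat.mod_eq_of_lt (Finset.mem_range.mp hj)]
  · intro a _; exact congrArg H (ZMod.natCast_mod a n).symm

lemma e_nat_div (j n : ℕ) [NeZero n] : e ((j : ℝ) / (n : ℝ)) = ZMod.stdAddChar ((j : ZMod n)) := by
  have : ((j : ZMod n)) = (((j : ℤ)) : ZMod n) := by push_cast; ring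
  rw [this, ZMod.stdAddChar_coe]
  unfold e
  congr 1
  push_cast
  ring

lemma conj_eq_inv (q : ℕ) [NeZero q] (χ : DirichletCharacter ℂ q) (x : ZMod q) :
    (starRingEnd ℂ) (χ x) = χ⁻¹ x := by
  by_cases hx : IsUnit x
  · rw [MulChar.inv_apply_eq_inv, Ring.inverse_eq_inv', ← Complex.inv_eq_conj]
    rw [show χ x = χ hx.unit by simp]
    exact DirichletCharacter.unit_norm_eq_one χ hx.unit
  · rw [MulChar.map_nonunit _ hx, MulChar.map_nonunit _ hx, map_zero]

lemma sum_range_mul_split {M : Type*} [AddCommMonoid M] (f : ℕ → M) (c q : ℕ) :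
    ∑ ℓ ∈ Finset.range (c * q), f ℓ
      = ∑ t ∈ Finset.range c, ∑ m ∈ Finset.range q, f (q * t + m) := by
  induction c with
  | zero => simp
  | succ c ih =>
    rw [Finset.sum_range_succ, ← ih, Nat.succ_mul,
      ← Finset.sum_range_add_sum_Ico f (Nat.le_add_right (c * q) q),
      Finset.sum_Ico_eq_sum_range]
    simp [mul_comm]

/-- for primitive χ mod q and coprime positive a, c, the average
`(1/(cq)) ∑_{ℓ=1}^{cq} χ(ℓ) e(ℓa/c)` is `0` unless `c ∣ q`, in which case it equals
`(1/q) χ̄(aq/c) τ(χ)`. -/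
theorem character_exponential_average (q : ℕ) [NeZero q] (χ : DirichletCharacter ℂ q)
    (hχ : χ.IsPrimitive) (a c : ℕ) (ha : 0 < a) (hc : 0 < c) (hac : Nat.gcd a c = 1) :
    (1 / ((c : ℂ) * (q : ℂ))) * ∑ ℓ ∈ Finset.Icc 1 (c * q),
        χ (ℓ : ZMod q) * e ((ℓ : ℝ) * (a : ℝ) / (c : ℝ)) =
      if c ∣ q then (1 / (q : ℂ)) * (starRingEnd ℂ) (χ ((a * (q / c) : ℕ) : ZMod q)) *
        gaussSum' q χ
      else 0 := by
  have hq : 0 < q := Nat.pos_of_ne_zero (NeZero.ne q)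
  haveI : NeZero c := ⟨hc.ne'⟩
  haveI : NeZero (c * q) := ⟨Nat.mul_ne_zero hc.ne' hq.ne'⟩
  -- the standard additive characters
  set ψc : AddChar (ZMod c) ℂ := ZMod.stdAddChar with hψc
  set ψq : AddChar (ZMod q) ℂ := ZMod.stdAddChar with hψq
  set H : ZMod (c * q) → ℂ := fun x =>
    χ (ZMod.castHom (dvd_mul_left q c) (ZMod q) x)
      * ψc ((a : ZMod c) * ZMod.castHom (dvd_mul_right c q) (ZMod c) x) with hH
  have hHl : ∀ ℓ : ℕ, H ((ℓ : ZMod (c * q)))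
      = χ (ℓ : ZMod q) * ψc (((a * ℓ : ℕ) : ZMod c)) := by
    intro ℓ
    simp only [hH, map_natCast]
    push_cast
    ring_nf
  have key : ∑ ℓ ∈ Finset.Icc 1 (c * q), χ (ℓ : ZMod q) * e ((ℓ : ℝ) * (a : ℝ) / (c : ℝ))
      = ∑ t ∈ Finset.range c, ∑ m ∈ Finset.range q,
          χ ((q * t + m : ℕ) : ZMod q) * ψc (((a * (q * t + m) : ℕ) : ZMod c)) := by
    calc ∑ ℓ ∈ Finset.Icc 1 (c * q), χ (ℓ : ZMod q) * e ((ℓ : ℝ) * (a : ℝ) / (c : ℝ))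
        = ∑ ℓ ∈ Finset.Icc 1 (c * q), H ((ℓ : ZMod (c * q))) := by
          refine Finset.sum_congr rfl fun ℓ _ => ?_
          rw [hHl, show (ℓ : ℝ) * a / c = ((a * ℓ : ℕ) : ℝ) / c by push_cast; ring, e_nat_div]
      _ = ∑ x : ZMod (c * q), H x := sum_Icc_eq_sum_zmod _ H
      _ = ∑ ℓ ∈ Finset.range (c * q), H ((ℓ : ZMod (c * q))) := (sum_range_eq_sum_zmod _ H).symm
      _ = ∑ t ∈ Finset.range c, ∑ m ∈ Finset.range q, H (((q * t + m : ℕ) : ZMod (c * q))) :=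
          sum_range_mul_split (fun ℓ => H ((ℓ : ZMod (c * q)))) c q
      _ = _ := Finset.sum_congr rfl fun t _ => Finset.sum_congr rfl fun m _ => hHl _
  have hterm : ∀ t m : ℕ, χ ((q * t + m : ℕ) : ZMod q) * ψc (((a * (q * t + m) : ℕ) : ZMod c))
      = ψc (((a * q : ℕ) : ZMod c) * (t : ZMod c)) * (χ ((m : ZMod q)) * ψc (((a * m : ℕ) : ZMod c))) := by
    intro t m
    have h1 : ((q * t + m : ℕ) : ZMod q) = (m : ZMod q) := by push_cast; simp
    have h2 : ((a * (q * t + m) : ℕ) : ZMod c)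
        = ((a * q : ℕ) : ZMod c) * (t : ZMod c) + ((a * m : ℕ) : ZMod c) := by push_cast; ring
    rw [h1, h2, AddChar.map_add_eq_mul]
    ring
  rw [key]
  simp_rw [hterm]
  rw [← Finset.sum_mul_sum]
  have hT : ∑ t ∈ Finset.range c, ψc (((a * q : ℕ) : ZMod c) * (t : ZMod c))
      = if ((a * q : ℕ) : ZMod c) = 0 then (c : ℂ) else 0 := by
    rw [sum_range_eq_sum_zmod c (fun x => ψc (((a * q : ℕ) : ZMod c) * x))]
    simp_rw [mul_comm (((a * q : ℕ) : ZMod c)) _]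
    rw [AddChar.sum_mulShift _ (ZMod.isPrimitive_stdAddChar c)]
    simp [ZMod.card]
  have hz : ((a * q : ℕ) : ZMod c) = 0 ↔ c ∣ q := by
    rw [ZMod.natCast_eq_zero_iff]
    constructor
    · intro h
      exact (Nat.coprime_comm.mp hac).dvd_of_dvd_mul_left h
    · intro h
      exact Dvd.dvd.mul_left h a
  by_cases hcq : c ∣ q
  · rw [if_pos hcq, hT, if_pos (hz.mpr hcq)]
    set b : ℕ := a * (q / c) with hb
    have hψeq : ∀ m : ℕ, ψc (((a * m : ℕ) : ZMod c)) = ψq (((b * m : ℕ) : ZMod q)) := by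
      intro m
      rw [hψc, hψq, ← e_nat_div, ← e_nat_div]
      congr 1
      rw [div_eq_div_iff (by exact_mod_cast hc.ne') (by exact_mod_cast hq.ne')]
      have h2 : q / c * c = q := Nat.div_mul_cancel hcq
      have : a * m * q = b * m * c := by
        calc a * m * q = a * m * (q / c * c) := by rw [h2]
          _ = b * m * c := by rw [hb]; ring
      exact_mod_cast congrArg (fun k : ℕ => (k : ℝ)) this
    have hM : ∑ m ∈ Finset.range q, χ ((m : ZMod q)) * ψc (((a * m : ℕ) : ZMod c))
        = χ⁻¹ ((b : ZMod q)) * gaussSum χ ψq := by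
      calc ∑ m ∈ Finset.range q, χ ((m : ZMod q)) * ψc (((a * m : ℕ) : ZMod c))
          = ∑ m ∈ Finset.range q, χ ((m : ZMod q)) * ψq ((b : ZMod q) * (m : ZMod q)) := by
            refine Finset.sum_congr rfl fun m _ => ?_
            rw [hψeq m]; push_cast; ring_nf
        _ = ∑ x : ZMod q, χ x * ψq ((b : ZMod q) * x) :=
            sum_range_eq_sum_zmod q (fun x => χ x * ψq ((b : ZMod q) * x))
        _ = gaussSum χ (ψq.mulShift ((b : ZMod q))) := by
            simp [gaussSum, AddChar.mulShift_apply]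
        _ = χ⁻¹ ((b : ZMod q)) * gaussSum χ ψq :=
            gaussSum_mulShift_of_isPrimitive ψq hχ _
    have hG : gaussSum' q χ = gaussSum χ ψq := by
      rw [gaussSum']
      calc ∑ ℓ ∈ Finset.Icc 1 q, χ (ℓ : ZMod q) * e ((ℓ : ℝ) / (q : ℝ))
          = ∑ ℓ ∈ Finset.Icc 1 q, χ (ℓ : ZMod q) * ψq ((ℓ : ZMod q)) := by
            refine Finset.sum_congr rfl fun ℓ _ => ?_
            rw [e_nat_div]
        _ = ∑ x : ZMod q, χ x * ψq x := sum_Icc_eq_sum_zmod q (fun x => χ x * ψq x)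
        _ = gaussSum χ ψq := rfl
    rw [hM, hG, conj_eq_inv]
    have hc0 : (c : ℂ) ≠ 0 := by exact_mod_cast hc.ne'
    have hq0 : (q : ℂ) ≠ 0 := by exact_mod_cast hq.ne'
    field_simp
  · rw [if_neg hcq, hT, if_neg (fun h => hcq (hz.mp h))]
    simp
end

section
/- Let χ be a primitive Dirichlet character modulo q and let a, c be coprime positive integers. The function F*(s,χ,a/c), defined for Re(s)>1 by Σ_{n≥1} χ(n) e(na/c) n^{-s}, extends to a meromorphic function on ℂ which is entire if c ≠ q, and if c = q has a unique simple pole at s = 1 with residue χ̄(a)τ(χ)/q. -/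
open Complex

/- Auxiliary lemmas -/

lemma sum_zmod_eq_sum_range {M : Type*} [AddCommMonoid M] {N : ℕ} [NeZero N] (f : ZMod N → M) :
    ∑ j : ZMod N, f j = ∑ j ∈ Finset.range N, f (j : ZMod N) := by
  rw [← Fin.sum_univ_eq_sum_range (fun j => f (j : ZMod N)) N]
  refine (Fintype.sum_bijective (fun i : Fin N => ((i : ℕ) : ZMod N)) ?_ _ _ fun x => rfl).symm
  rw [Fintype.bijective_iff_injective_and_card]
  refine ⟨fun x y h => ?_, by simp [ZMod.card]⟩
  have := congrArg ZMod.val h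
  rwa [ZMod.val_cast_of_lt x.2, ZMod.val_cast_of_lt y.2, Fin.val_inj] at this

lemma sum_range_mul' {M : Type*} [AddCommMonoid M] (p r : ℕ) (f : ℕ → M) :
    ∑ j ∈ Finset.range (p * r), f j
      = ∑ u ∈ Finset.range p, ∑ m ∈ Finset.range r, f (u + p * m) := by
  rw [← Finset.sum_product']
  refine Finset.sum_nbij' (fun j => (j % p, j / p)) (fun x => x.1 + p * x.2) ?_ ?_ ?_ ?_ ?_
  · intro j hj
    rw [Finset.mem_range] at hj
    have hp : 0 < p := by
      rcases Nat.eq_zero_or_pos p with h | h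
      · simp [h] at hj
      · exact h
    refine Finset.mem_product.mpr ⟨Finset.mem_range.mpr (Nat.mod_lt _ hp), ?_⟩
    rw [Finset.mem_range]
    exact Nat.div_lt_of_lt_mul hj
  · intro x hx
    rw [Finset.mem_product, Finset.mem_range, Finset.mem_range] at hx
    rw [Finset.mem_range]
    calc x.1 + p * x.2 < p + p * x.2 := by omega
    _ = p * (x.2 + 1) := by ring
    _ ≤ p * r := Nat.mul_le_mul_left p hx.2
  · intro j _; exact Nat.mod_add_div j p
  · intro x hx
    rw [Finset.mem_product, Finset.mem_range, Finset.mem_range] at hx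
    have h1 : (x.1 + p * x.2) % p = x.1 := by
      rw [Nat.add_mul_mod_self_left, Nat.mod_eq_of_lt hx.1]
    have h2 : (x.1 + p * x.2) / p = x.2 := by
      rw [Nat.add_mul_div_left _ _ (by omega : 0 < p), Nat.div_eq_of_lt hx.1, zero_add]
    simp [h1, h2]
  · intro j _; exact (congrArg f (Nat.mod_add_div j p)).symm

lemma stdAddChar_nat {N : ℕ} [NeZero N] (j : ℕ) :
    ZMod.stdAddChar ((j : ℕ) : ZMod N) = Complex.exp (2 * Real.pi * Complex.I * j / N) := by
  rw [ZMod.stdAddChar_apply, ZMod.toCircle_natCast]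

lemma gaussSum_eq_gaussSum' (q : ℕ) [NeZero q] (χ : DirichletCharacter ℂ q) :
    gaussSum χ ZMod.stdAddChar = gaussSum' q χ := by
  set g : ℕ → ℂ := fun ℓ => χ (ℓ : ZMod q) * ZMod.stdAddChar ((ℓ : ℕ) : ZMod q) with hg
  have key : ∀ ℓ : ℕ, g ℓ = χ (ℓ : ZMod q) * e ((ℓ : ℝ) / (q : ℝ)) := by
    intro ℓ
    rw [hg]
    simp only
    rw [stdAddChar_nat, e]
    congr 2
    push_cast
    ring
  have hq0 : g q = g 0 := by
    simp only [hg, Nat.cast_zero, ZMod.natCast_self]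
  have h0 : gaussSum χ ZMod.stdAddChar = ∑ ℓ ∈ Finset.range q, g ℓ :=
    sum_zmod_eq_sum_range (fun x => χ x * ZMod.stdAddChar x)
  have h1 : ∑ ℓ ∈ Finset.Ico 0 (q + 1), g ℓ = ∑ ℓ ∈ Finset.Ico 0 q, g ℓ + g q :=
    Finset.sum_Ico_succ_top (Nat.zero_le q) g
  have h2 : ∑ ℓ ∈ Finset.Ico 0 (q + 1), g ℓ = g 0 + ∑ ℓ ∈ Finset.Ico 1 (q + 1), g ℓ :=
    Finset.sum_eq_sum_Ico_succ_bot (Nat.succ_pos q) g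
  have h4 : gaussSum' q χ = ∑ ℓ ∈ Finset.Ico 1 (q + 1), g ℓ := by
    rw [gaussSum', ← Finset.Ico_add_one_right_eq_Icc]
    exact Finset.sum_congr rfl fun ℓ _ => (key ℓ).symm
  rw [h0, h4, Finset.range_eq_Ico]
  linear_combination h2 - h1 - hq0

/-- the twisted periodic zeta function `F*(s,χ,a/c)` extends to a meromorphic
function on ℂ, entire if `c ≠ q`, and with a unique simple pole at `s = 1` of residue
`χ̄(a) τ(χ) / q` if `c = q`. -/
theorem twisted_periodic_zeta_continuation (q : ℕ) [NeZero q] (χ : DirichletCharacter ℂ q)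
    (hχ : χ.IsPrimitive) (a c : ℕ) (ha : 0 < a) (hc : 0 < c) (hac : Nat.gcd a c = 1) :
    ∃ F : ℂ → ℂ,
      (∀ s : ℂ, 1 < s.re →
        F s = ∑' n : ℕ+, χ ((n : ℕ) : ZMod q) * e ((n : ℝ) * (a : ℝ) / (c : ℝ)) *
          (n : ℂ) ^ (-s)) ∧
      (c ≠ q → Differentiable ℂ F) ∧
      (c = q → DifferentiableOn ℂ F {(1 : ℂ)}ᶜ ∧
        Filter.Tendsto (fun s : ℂ => (s - 1) * F s) (nhdsWithin 1 {(1 : ℂ)}ᶜ)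
          (nhds ((starRingEnd ℂ) (χ (a : ZMod q)) * gaussSum' q χ / (q : ℂ)))) := by
  haveI : NeZero c := ⟨hc.ne'⟩
  haveI hN : NeZero (q * c) := ⟨mul_ne_zero (NeZero.ne q) hc.ne'⟩
  set Φ : ZMod (q * c) → ℂ := fun j =>
    χ (ZMod.castHom (dvd_mul_right q c) (ZMod q) j) *
      ZMod.stdAddChar ((a : ZMod c) * ZMod.castHom (dvd_mul_left c q) (ZMod c) j) with hΦ
  -- value of Φ at naturals
  have hΦnat : ∀ n : ℕ, Φ ((n : ℕ) : ZMod (q * c))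
      = χ ((n : ℕ) : ZMod q) * e ((n : ℝ) * (a : ℝ) / (c : ℝ)) := by
    intro n
    rw [hΦ]
    simp only [map_natCast]
    congr 1
    have h1 : (a : ZMod c) * (n : ZMod c) = ((a * n : ℕ) : ZMod c) := by push_cast; ring
    rw [h1, stdAddChar_nat, e]
    have hc0 : (c : ℂ) ≠ 0 := Nat.cast_ne_zero.mpr hc.ne'
    have harg : 2 * (Real.pi : ℂ) * Complex.I * ((a * n : ℕ) : ℂ) / (c : ℂ)
        = 2 * (Real.pi : ℂ) * Complex.I * (((n : ℝ) * (a : ℝ) / (c : ℝ) : ℝ) : ℂ) := by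
      push_cast
      ring
    rw [harg]
  -- the sum of Φ over all residues
  have hψ := ZMod.isPrimitive_stdAddChar c
  have hsum : ∑ j : ZMod (q * c), Φ j
      = (∑ u ∈ Finset.range q, χ ((u : ℕ) : ZMod q)
          * ZMod.stdAddChar (((a * u : ℕ) : ZMod c)))
        * (if ((q * a : ℕ) : ZMod c) = 0 then (c : ℂ) else 0) := by
    rw [sum_zmod_eq_sum_range, sum_range_mul' q c (fun j => Φ ((j : ℕ) : ZMod (q * c)))]
    have hterm : ∀ u m : ℕ, Φ (((u + q * m : ℕ)) : ZMod (q * c))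
        = χ ((u : ℕ) : ZMod q) * ZMod.stdAddChar (((a * u : ℕ) : ZMod c))
          * ZMod.stdAddChar (((q * a : ℕ) : ZMod c) * ((m : ℕ) : ZMod c)) := by
      intro u m
      rw [hΦ]
      simp only [map_natCast]
      have h1 : ((u + q * m : ℕ) : ZMod q) = ((u : ℕ) : ZMod q) := by
        push_cast [ZMod.natCast_self]; ring
      have h2 : (a : ZMod c) * ((u + q * m : ℕ) : ZMod c)
          = ((a * u : ℕ) : ZMod c) + ((q * a : ℕ) : ZMod c) * ((m : ℕ) : ZMod c) := by
        push_cast; ring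
      rw [h1, h2, AddChar.map_add_eq_mul, mul_assoc]
    calc ∑ u ∈ Finset.range q, ∑ m ∈ Finset.range c, Φ (((u + q * m : ℕ)) : ZMod (q * c))
        = ∑ u ∈ Finset.range q, (χ ((u : ℕ) : ZMod q)
            * ZMod.stdAddChar (((a * u : ℕ) : ZMod c)))
            * ∑ m ∈ Finset.range c,
              ZMod.stdAddChar (((q * a : ℕ) : ZMod c) * ((m : ℕ) : ZMod c)) := by
          refine Finset.sum_congr rfl fun u _ => ?_
          rw [Finset.mul_sum]
          exact Finset.sum_congr rfl fun m _ => hterm u m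
    _ = _ := by
        rw [← Finset.sum_mul]
        congr 1
        have h3 : ∑ m ∈ Finset.range c,
            ZMod.stdAddChar (((q * a : ℕ) : ZMod c) * ((m : ℕ) : ZMod c))
            = ∑ x : ZMod c, ZMod.stdAddChar (x * ((q * a : ℕ) : ZMod c)) := by
          rw [sum_zmod_eq_sum_range (fun x => ZMod.stdAddChar (x * ((q * a : ℕ) : ZMod c)))]
          exact Finset.sum_congr rfl fun m _ => by rw [mul_comm]
        rw [h3, AddChar.sum_mulShift _ hψ]
        split_ifs with h
        · simp [ZMod.card]
        · simp
  refine ⟨ZMod.LFunction Φ, ?_, ?_, ?_⟩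
  · -- identification with the Dirichlet series
    intro s hs
    rw [ZMod.LFunction_eq_LSeries Φ hs, LSeries]
    rw [← Function.Injective.tsum_eq (g := fun n : ℕ+ => (n : ℕ))
      (fun x y h => PNat.coe_injective h) (f := LSeries.term (Φ ·) s) ?_]
    · refine tsum_congr fun n => ?_
      rw [LSeries.term_of_ne_zero n.pos.ne' (Φ ·) s, hΦnat, cpow_neg, div_eq_mul_inv]
    · intro n hn
      rcases Nat.eq_zero_or_pos n with h | h
      · exfalso; apply hn; simp [h, LSeries.term_zero]
      · exact ⟨⟨n, h⟩, rfl⟩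
  · -- c ≠ q : entire
    intro hcq
    refine ZMod.differentiable_LFunction_of_sum_zero ?_
    rw [hsum]
    by_cases hdvd : ((q * a : ℕ) : ZMod c) = 0
    · -- c ∣ q case
      rw [if_pos hdvd]
      have hcq' : c ∣ q := by
        have : c ∣ q * a := (ZMod.natCast_eq_zero_iff _ _).mp hdvd
        exact (Nat.Coprime.dvd_of_dvd_mul_right (Nat.coprime_comm.mp hac) this)
      obtain ⟨d, hd⟩ := hcq'
      have hd0 : d ≠ 0 := by rintro rfl; rw [mul_zero] at hd; exact NeZero.ne q hd
      have hkey : ∀ u : ℕ, ZMod.stdAddChar (((a * u : ℕ) : ZMod c))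
          = ZMod.stdAddChar (((a * d * u : ℕ) : ZMod q)) := by
        intro u
        rw [stdAddChar_nat, stdAddChar_nat]
        congr 1
        have hc0 : (c : ℂ) ≠ 0 := Nat.cast_ne_zero.mpr hc.ne'
        have hd0' : (d : ℂ) ≠ 0 := Nat.cast_ne_zero.mpr hd0
        rw [hd]
        push_cast
        rw [div_eq_div_iff hc0 (mul_ne_zero hc0 hd0')]
        ring
      have hT : ∑ u ∈ Finset.range q, χ ((u : ℕ) : ZMod q)
          * ZMod.stdAddChar (((a * u : ℕ) : ZMod c))
          = gaussSum χ (ZMod.stdAddChar.mulShift ((a * d : ℕ) : ZMod q)) := by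
        rw [gaussSum, sum_zmod_eq_sum_range
          (fun x => χ x * (ZMod.stdAddChar.mulShift ((a * d : ℕ) : ZMod q)) x)]
        refine Finset.sum_congr rfl fun u _ => ?_
        rw [hkey, AddChar.mulShift_apply]
        congr 2
        push_cast; ring
      rw [hT, gaussSum_mulShift_of_isPrimitive _ hχ]
      -- a * d is not a unit mod q since d > 1 divides q
      have hd1 : d ≠ 1 := by rintro rfl; rw [mul_one] at hd; exact hcq hd.symm
      have hnu : ¬ IsUnit (((a * d : ℕ) : ZMod q)) := by
        rw [ZMod.isUnit_iff_coprime]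
        intro hcop
        have h1 : d ∣ a * d := dvd_mul_left d a
        have h2 : d ∣ q := ⟨c, by rw [hd]; ring⟩
        have h3 : d ∣ Nat.gcd (a * d) q := Nat.dvd_gcd h1 h2
        rw [Nat.Coprime] at hcop
        rw [hcop] at h3
        exact hd1 (Nat.dvd_one.mp h3)
      rw [MulChar.map_nonunit _ hnu, zero_mul, zero_mul]
    · rw [if_neg hdvd, mul_zero]
  · -- c = q : pole at 1 with the right residue
    rintro rfl
    constructor
    · intro s hs
      exact (ZMod.differentiableAt_LFunction Φ s (Or.inl hs)).differentiableWithinAt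
    · have hres0 := ZMod.LFunction_residue_one Φ
      have hres : ∑ j : ZMod (c * c), Φ j / ((c * c : ℕ) : ℂ)
          = (starRingEnd ℂ) (χ (a : ZMod c)) * gaussSum' c χ / (c : ℂ) := by
        rw [← Finset.sum_div, hsum]
        have hdvd : ((c * a : ℕ) : ZMod c) = 0 := by
          rw [ZMod.natCast_eq_zero_iff]
          exact dvd_mul_right c a
        rw [if_pos hdvd]
        -- the Gauss sum part with c = q
        have hT : ∑ u ∈ Finset.range c, χ ((u : ℕ) : ZMod c)
            * ZMod.stdAddChar (((a * u : ℕ) : ZMod c))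
            = gaussSum χ (ZMod.stdAddChar.mulShift ((a : ℕ) : ZMod c)) := by
          rw [gaussSum, sum_zmod_eq_sum_range
            (fun x => χ x * (ZMod.stdAddChar.mulShift ((a : ℕ) : ZMod c)) x)]
          refine Finset.sum_congr rfl fun u _ => ?_
          rw [AddChar.mulShift_apply]
          congr 2
          push_cast; ring
        rw [hT, gaussSum_mulShift_of_isPrimitive _ hχ]
        -- χ⁻¹(a) = conj (χ a)
        have hcop : Nat.Coprime a c := hac
        have hu : IsUnit ((a : ℕ) : ZMod c) := (ZMod.isUnit_iff_coprime a c).mpr hcop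
        have hconj : χ⁻¹ ((a : ℕ) : ZMod c) = (starRingEnd ℂ) (χ ((a : ℕ) : ZMod c)) := by
          rw [MulChar.inv_apply_eq_inv']
          refine inv_eq_conj ?_
          have := DirichletCharacter.unit_norm_eq_one χ hu.unit
          rwa [hu.unit_spec] at this
        rw [hconj, gaussSum_eq_gaussSum' c χ]
        have hq0 : (c : ℂ) ≠ 0 := Nat.cast_ne_zero.mpr hc.ne'
        push_cast
        rw [div_eq_div_iff (mul_ne_zero hq0 hq0) hq0]
        ring
      rw [hres] at hres0
      exact hres0
end
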